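/- Let p be an odd prime and m ≥ 1 with p^m > 3, and let n ≥ 3. Let B be the additive group (ℤ/p^{3m}ℤ)^n (the direct sum of n copies of ℤ/p^{3m}ℤ) and let A be the subgroup p^{2m}·B = {p^{2m}·x : x ∈ B} of B. Then every additive automorphism of B maps A onto A, the induced restriction map ν : Aut(B) → Aut(A) (sending an automorphism of B to the automorphism of A it induces) is a surjective group homomorphism, and ν does not weakly split (it has no weak splitting). -/

import Mathlib

/-- A weak splitting of a surjective group homomorphism `ν : G → H`. -/
def IsWeakSplitting {G H : Type*} [Group G] [Group H] (ν : G →* H) (s : H → G) : Prop :=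
  (∀ h, ν (s h) = h) ∧
  ∃ G₀ : Subgroup G,
    (∀ a ∈ G₀, ∀ b ∈ G₀, a * b = b * a) ∧
    ∀ l : List (H × ℤ), (∀ p ∈ l, p.2 = 1 ∨ p.2 = -1) →
      (l.map fun p => p.1 ^ p.2).prod = 1 →
      (l.map fun p => s p.1 ^ p.2).prod ∈ G₀

/-- The multiplicative group structure on `AddAut A` that Mathlib provided in the older library
(multiplication is composition). -/
instance AddAut.groupOld (A : Type*) [Add A] : Group (AddAut A) where
  mul g h := AddEquiv.trans h g
  one := AddEquiv.refl _
  inv := AddEquiv.symm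
  mul_assoc _ _ _ := rfl
  one_mul _ := rfl
  mul_one _ := rfl
  inv_mul_cancel := AddEquiv.self_trans_symm

/-- The subgroup `k·B = {k·x : x ∈ B}` of an additive abelian group `B`. -/
def smulSubgroup (k : ℕ) (B : Type*) [AddCommGroup B] : AddSubgroup B where
  carrier := Set.range fun y : B => k • y
  zero_mem' := ⟨0, smul_zero k⟩
  add_mem' := by
    rintro _ _ ⟨y₁, rfl⟩ ⟨y₂, rfl⟩
    exact ⟨y₁ + y₂, smul_add k y₁ y₂⟩
  neg_mem' := by
    rintro _ ⟨y, rfl⟩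
    exact ⟨-y, smul_neg k y⟩

namespace AutWS

/-! ### Abstract ring lemmas -/

variable {Λ : Type*} [Ring Λ]

lemma pow_expand (q2 : ℕ) (D W : Λ) (hD4 : D^4 = q2 • W) (j : ℕ) :
    ∃ Θ : Λ, (1+D)^j
      = 1 + j•D + (j.choose 2)•D^2 + (j.choose 3)•D^3 + q2•Θ := by
  induction j with
  | zero => exact ⟨0, by simp⟩
  | succ j ih =>
    obtain ⟨Θ, hΘ⟩ := ih
    refine ⟨Θ + Θ*D + (j.choose 3)•W, ?_⟩
    have h4 : (j.choose 3) • (D^3*D) = q2 • ((j.choose 3)•W) := by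
      rw [← pow_succ, hD4, smul_comm]
    calc (1+D)^(j+1) = (1 + j•D + (j.choose 2)•D^2 + (j.choose 3)•D^3 + q2•Θ) * (1+D) := by
          rw [pow_succ, hΘ]
      _ = 1 + (j+1)•D + (j + j.choose 2)•D^2 + (j.choose 2 + j.choose 3)•D^3
            + (j.choose 3)•(D^3*D) + q2•(Θ + Θ*D) := by
          simp only [mul_add, add_mul, mul_one, one_mul, smul_mul_assoc, add_smul, smul_add,
            succ_nsmul, pow_succ, pow_zero]
          module
      _ = 1 + (j+1)•D + ((j+1).choose 2)•D^2 + ((j+1).choose 3)•D^3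
            + q2•(Θ + Θ*D + (j.choose 3)•W) := by
          rw [h4]
          simp only [Nat.choose_succ_succ, Nat.choose_one_right, smul_add]
          module

lemma pow_shape (q c2 : ℕ) (hc2 : q.choose 2 = q*c2) (E a : Λ) (hE : E*E = 0) :
    ∃ P : Λ, (1+(E+q•a))^q
      = 1 + q•E + (q*(q.choose 3))•(E*(a*E)) + (q*q)•P := by
  have hD2 : (E+q•a)^2 = q•(E*a) + q•(a*E) + (q*q)•(a*a) := by
    simp only [pow_two, mul_add, add_mul, smul_mul_assoc, mul_smul_comm, smul_smul, hE,
      zero_add, mul_assoc]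
    module
  have hD3 : (E+q•a)^3 = q•(E*(a*E))
      + (q*q)•(E*(a*a) + a*(E*a) + a*(a*E) + q•(a*(a*a))) := by
    rw [pow_succ _ 2, hD2]
    simp only [mul_add, add_mul, smul_mul_assoc, mul_smul_comm, smul_smul, hE,
      mul_assoc, mul_zero, zero_mul, smul_zero, add_zero, zero_add, smul_add]
    module
  set Z₃ : Λ := E*(a*a) + a*(E*a) + a*(a*E) + q•(a*(a*a)) with hZ₃
  have hD4 : (E+q•a)^4 = (q^2) • (E*(a*(E*a)) + Z₃*E + q•(Z₃*a)) := by
    rw [pow_succ _ 3, hD3, hZ₃, pow_two]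
    simp only [mul_add, add_mul, smul_mul_assoc, mul_smul_comm, smul_smul, hE,
      mul_assoc, mul_zero, zero_mul, smul_zero, add_zero, zero_add, smul_add]
    module
  obtain ⟨Θ, hΘ⟩ := pow_expand (q^2) (E+q•a) _ hD4 q
  refine ⟨a + c2•(E*a) + c2•(a*E) + (c2*q)•(a*a) + (q.choose 3)•(E*(a*a) + a*(E*a) + a*(a*E)
      + q•(a*(a*a))) + Θ, ?_⟩
  rw [hΘ, hD2, hD3, hc2, hZ₃]
  simp only [smul_add, smul_smul, pow_two]
  module

lemma key (q pp c2 qd β : ℕ) (hc2 : q.choose 2 = q*c2) (hqd : q = pp*qd)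
    (hc3 : q.choose 3 = pp*β)
    (E F a b : Λ) (hE : E*E = 0) (hF : F*F = 0) (hFE : F*E = 0)
    (hcom : (1+(E+q•a))^q * (1+(F+q•b))^q = (1+(F+q•b))^q * (1+(E+q•a))^q) :
    ∃ z : Λ, (q*q)•(E*F) = ((q*q)*pp)•z := by
  obtain ⟨P₀, hP₀⟩ := pow_shape q c2 hc2 E a hE
  obtain ⟨R₀, hR₀⟩ := pow_shape q c2 hc2 F b hF
  have hX : (1+(E+q•a))^q = 1 + q•E + (q*pp)•(β•(E*(a*E)) + qd•P₀) := by
    rw [hP₀, hc3]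
    have e1 : (q*(pp*β))•(E*(a*E)) = (q*pp)•(β•(E*(a*E))) := by
      rw [smul_smul]; ring_nf
    have e2 : (q*q)•P₀ = (q*pp)•(qd•P₀) := by
      rw [smul_smul]; congr 1; rw [hqd]; ring
    rw [e1, e2, smul_add, add_assoc]
  have hY : (1+(F+q•b))^q = 1 + q•F + (q*pp)•(β•(F*(b*F)) + qd•R₀) := by
    rw [hR₀, hc3]
    have e1 : (q*(pp*β))•(F*(b*F)) = (q*pp)•(β•(F*(b*F))) := by
      rw [smul_smul]; ring_nf
    have e2 : (q*q)•R₀ = (q*pp)•(qd•R₀) := by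
      rw [smul_smul]; congr 1; rw [hqd]; ring
    rw [e1, e2, smul_add, add_assoc]
  set P : Λ := β•(E*(a*E)) + qd•P₀ with hP
  set R : Λ := β•(F*(b*F)) + qd•R₀ with hR
  set z₀ : Λ := E*R + P*F - F*P - R*E + pp•(P*R - R*P) with hz₀
  have hdiff : (1+(E+q•a))^q * (1+(F+q•b))^q - (1+(F+q•b))^q * (1+(E+q•a))^q
      = (q*q)•(E*F) - (q*q)•(F*E) + ((q*q)*pp)•z₀ := by
    rw [hX, hY, hz₀]
    simp only [mul_add, add_mul, mul_one, one_mul, smul_mul_assoc, mul_smul_comm,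
      smul_smul, smul_sub, smul_add, sub_eq_add_neg, neg_add, mul_sub, sub_mul]
    module
  rw [hcom, sub_self, hFE, smul_zero, sub_zero] at hdiff
  refine ⟨-z₀, ?_⟩
  rw [eq_neg_of_add_eq_zero_left hdiff.symm, smul_neg]

lemma pow_one_add (E : Λ) (hE : E*E = 0) (k : ℕ) : (1+E)^k = 1 + k•E := by
  induction k with
  | zero => simp
  | succ k ih =>
    rw [pow_succ, ih, succ_nsmul]
    simp only [mul_add, add_mul, mul_one, one_mul, smul_mul_assoc, hE, smul_zero]
    abel

/-! ### Setup for `B = (ZMod p^{3m})^n` -/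

section Setup

variable (p m n : ℕ)

local notation "N" => p ^ (3*m)
local notation "B" => Fin n → ZMod (p ^ (3*m))
local notation "A" => smulSubgroup (p ^ (2*m)) (Fin n → ZMod (p ^ (3*m)))

lemma mem_A_iff (x : B) : x ∈ A ↔ ∃ y : B, p^(2*m) • y = x := Iff.rfl

lemma smul_mem_A (y : B) : p^(2*m) • y ∈ A := ⟨y, rfl⟩

lemma apply_mem (g : AddAut B) {x : B} (hx : x ∈ A) : g x ∈ A := by
  obtain ⟨y, rfl⟩ := hx
  exact ⟨g y, (map_nsmul g _ _).symm⟩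

/-- restriction of an automorphism of `B` to `A`. -/
def res (g : AddAut B) : AddAut A where
  toFun x := ⟨g x, apply_mem p m n g x.2⟩
  invFun x := ⟨g.symm x, apply_mem p m n g.symm x.2⟩
  left_inv x := Subtype.ext (g.symm_apply_apply x.val)
  right_inv x := Subtype.ext (g.apply_symm_apply x.val)
  map_add' x y := Subtype.ext (map_add g x.val y.val)

/-- The restriction homomorphism `ν`. -/
def nu : AddAut B →* AddAut A where
  toFun := res p m n
  map_one' := rfl
  map_mul' g h := rfl

lemma nu_coe (g : AddAut B) (x : A) : ((nu p m n g) x).val = g x.val := rfl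

variable [NeZero p]

lemma smulN (v : B) : (p^(3*m)) • v = 0 := by
  funext i
  show (p^(3*m)) • v i = 0
  rw [nsmul_eq_mul, ZMod.natCast_self, zero_mul]

lemma mod_smul (k : ℕ) (v : B) : (k % p^(3*m)) • v = k • v := by
  calc (k % p^(3*m)) • v = (p^(3*m) * (k / p^(3*m))) • v + (k % p^(3*m)) • v := by
        rw [mul_smul, smulN, zero_add]
    _ = k • v := by rw [← add_smul, Nat.div_add_mod]

lemma val_smul_add (t s : ZMod N) (v : B) :
    (t + s).val • v = t.val • v + s.val • v := by
  rw [ZMod.val_add, mod_smul, add_smul]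

/-- The additive endomorphism of `B` sending `single j 1` to `w j`. -/
def liftHom (w : Fin n → B) : AddMonoid.End B :=
  AddMonoidHom.mk' (fun x => ∑ j, (x j).val • w j) (by
    intro x y
    rw [← Finset.sum_add_distrib]
    exact Finset.sum_congr rfl fun j _ => val_smul_add p m n _ _ _)

lemma liftHom_apply (w : Fin n → B) (x : B) :
    liftHom p m n w x = ∑ j, (x j).val • w j := rfl

lemma single_smul_one (t : ZMod N) (j : Fin n) :
    t.val • (Pi.single j 1 : B) = Pi.single j t := by
  rw [← Pi.single_smul, nsmul_eq_mul, mul_one, ZMod.natCast_val, ZMod.cast_id]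

lemma apply_eq_sum (f : AddMonoid.End B) (x : B) :
    f x = ∑ j, (x j).val • f (Pi.single j 1) := by
  conv_lhs => rw [← Finset.univ_sum_single x]
  rw [map_sum]
  refine Finset.sum_congr rfl fun j _ => ?_
  rw [← map_nsmul, single_smul_one]


lemma zdiv (t : ZMod N) (h : p^(2*m) • t = 0) : ∃ s : ZMod N, p^m • s = t := by
  have h1 : ((p^(2*m) * t.val : ℕ) : ZMod N) = 0 := by
    rw [Nat.cast_mul, ZMod.natCast_val, ZMod.cast_id, ← nsmul_eq_mul]
    exact h
  have h3 : p^(3*m) ∣ p^(2*m) * t.val := by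
    rwa [ZMod.natCast_eq_zero_iff] at h1
  have h4 : p^m ∣ t.val := by
    have h5 : p^(2*m) * p^m ∣ p^(2*m) * t.val := by
      rw [← pow_add]
      have : 2*m + m = 3*m := by ring
      rwa [this]
    exact (mul_dvd_mul_iff_left (pow_ne_zero (2*m) (NeZero.ne p))).mp h5
  refine ⟨((t.val / p^m : ℕ) : ZMod N), ?_⟩
  rw [nsmul_eq_mul, ← Nat.cast_mul, Nat.mul_div_cancel' h4, ZMod.natCast_val, ZMod.cast_id]

lemma vdiv (v : B) (h : p^(2*m) • v = 0) : ∃ z : B, p^m • z = v := by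
  have h' : ∀ i, p^(2*m) • v i = 0 := fun i => congrFun h i
  choose z hz using fun i => zdiv p m (v i) (h' i)
  exact ⟨z, funext fun i => hz i⟩

lemma homdiv (γ : AddMonoid.End B) (h : ∀ y : B, γ (p^(2*m) • y) = 0) :
    ∃ a : AddMonoid.End B, ∀ x, p^m • a x = γ x := by
  have htor : ∀ x : B, p^(2*m) • γ x = 0 := fun x => by
    rw [← map_nsmul]; exact h x
  choose w hw using fun j : Fin n => vdiv p m n (γ (Pi.single j 1)) (htor _)
  refine ⟨liftHom p m n w, fun x => ?_⟩
  rw [liftHom_apply, Finset.smul_sum]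
  rw [apply_eq_sum p m n γ x]
  exact Finset.sum_congr rfl fun j _ => by rw [smul_comm, hw]


def Ehom (i j : Fin n) : AddMonoid.End B :=
  AddMonoidHom.mk' (fun x => Pi.single i (x j)) (by
    intro x y
    simp [Pi.single_add])

lemma Ehom_apply (i j : Fin n) (x : B) : Ehom p m n i j x = Pi.single i (x j) := rfl

lemma Ehom_mul_eq_zero (i j k l : Fin n) (h : j ≠ k) :
    Ehom p m n i j * Ehom p m n k l = 0 := by
  apply AddMonoidHom.ext
  intro x
  have h1 : (Ehom p m n i j * Ehom p m n k l) x
      = Pi.single i (((Pi.single k (x l) : B)) j) := rfl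
  refine h1.trans ?_
  rw [Pi.single_eq_of_ne h, Pi.single_zero]
  rfl

lemma Ehom_mul_eq (i j l : Fin n) :
    Ehom p m n i j * Ehom p m n j l = Ehom p m n i l := by
  apply AddMonoidHom.ext
  intro x
  have h1 : (Ehom p m n i j * Ehom p m n j l) x
      = Pi.single i (((Pi.single j (x l) : B)) j) := rfl
  refine h1.trans ?_
  rw [Pi.single_eq_same]
  rfl

def transvec (i j : Fin n) (hij : j ≠ i) : AddAut B where
  toFun x := x + Pi.single i (x j)
  invFun x := x - Pi.single i (x j)
  left_inv x := by
    have hx : ((x + (Pi.single i (x j) : B))) j = x j := by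
      rw [Pi.add_apply, Pi.single_eq_of_ne hij, add_zero]
    show (x + Pi.single i (x j)) - Pi.single i (((x + (Pi.single i (x j) : B))) j) = x
    rw [hx, add_sub_cancel_right]
  right_inv x := by
    have hx : ((x - (Pi.single i (x j) : B))) j = x j := by
      rw [Pi.sub_apply, Pi.single_eq_of_ne hij, sub_zero]
    show (x - Pi.single i (x j)) + Pi.single i (((x - (Pi.single i (x j) : B))) j) = x
    rw [hx, sub_add_cancel]
  map_add' x y := by
    show (x+y) + Pi.single i ((x+y) j) = (x + Pi.single i (x j)) + (y + Pi.single i (y j))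
    rw [Pi.add_apply, Pi.single_add]
    abel

def toEnd : AddAut B →* AddMonoid.End B where
  toFun g := AddEquiv.toAddMonoidHom g
  map_one' := rfl
  map_mul' g h := rfl

lemma toEnd_apply (g : AddAut B) (x : B) : toEnd p m n g x = g x := rfl

lemma toEnd_transvec (i j : Fin n) (hij : j ≠ i) :
    toEnd p m n (transvec p m n i j hij) = 1 + Ehom p m n i j := rfl

lemma pow23 : p^m * p^(2*m) = p^(3*m) := by
  rw [← pow_add]
  congr 1
  omega

lemma nu_transvec_pow (i j : Fin n) (hij : j ≠ i) :
    (nu p m n (transvec p m n i j hij))^(p^m) = 1 := by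
  rw [← map_pow]
  apply DFunLike.ext
  intro x
  apply Subtype.ext
  obtain ⟨y, hy⟩ := x.2
  have hpow : toEnd p m n ((transvec p m n i j hij)^(p^m))
      = 1 + (p^m)•(Ehom p m n i j) := by
    rw [map_pow, toEnd_transvec, pow_one_add _ (Ehom_mul_eq_zero p m n i j i j hij)]
  have h1 : ((nu p m n ((transvec p m n i j hij)^(p^m))) x).val
      = ((transvec p m n i j hij)^(p^m)) x.val := rfl
  have h2 : ((transvec p m n i j hij)^(p^m)) x.val
      = x.val + (p^m) • (Ehom p m n i j x.val) := by
    have : ((transvec p m n i j hij)^(p^m)) x.val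
        = (toEnd p m n ((transvec p m n i j hij)^(p^m))) x.val := rfl
    rw [this, hpow]
    rfl
  have h3 : (p^m) • (Ehom p m n i j x.val) = 0 := by
    rw [← hy, map_nsmul, smul_smul, pow23 p m, smulN]
  rw [h1, h2, h3, add_zero]
  rfl

set_option synthInstance.maxHeartbeats 800000 in
lemma nu_surj : Function.Surjective (nu p m n) := by
  intro phi
  have hmem : ∀ j : Fin n, ∃ y : B,
      p^(2*m) • y = (phi ⟨p^(2*m) • Pi.single j 1, smul_mem_A p m n _⟩).val :=
    fun j => (phi _).2
  choose w hw using hmem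
  set g0 := liftHom p m n w with hg0
  have hAdec : ∀ y : B, (⟨p^(2*m) • y, smul_mem_A p m n y⟩ : A)
      = ∑ j, (y j).val • (⟨p^(2*m) • Pi.single j 1, smul_mem_A p m n _⟩ : A) := by
    intro y
    apply Subtype.ext
    have h1 : ((∑ j, (y j).val • (⟨p^(2*m) • Pi.single j 1, smul_mem_A p m n _⟩ : A) : A) : B)
        = ∑ j, (y j).val • (p^(2*m) • (Pi.single j 1 : B)) := by
      simp
    rw [h1]
    calc (p^(2*m) • y : B) = p^(2*m) • ∑ j, (y j).val • (Pi.single j 1 : B) := by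
          congr 1
          conv_lhs => rw [← Finset.univ_sum_single y]
          exact Finset.sum_congr rfl fun j _ => (single_smul_one p m n (y j) j).symm
      _ = ∑ j, (y j).val • (p^(2*m) • (Pi.single j 1 : B)) := by
          rw [Finset.smul_sum]
          exact Finset.sum_congr rfl fun j _ => smul_comm _ _ _
  have hres : ∀ y : B, g0 (p^(2*m) • y) = (phi ⟨p^(2*m) • y, smul_mem_A p m n y⟩).val := by
    intro y
    calc g0 (p^(2*m) • y) = p^(2*m) • g0 y := map_nsmul g0 _ _
      _ = ∑ j, (y j).val • (p^(2*m) • w j) := by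
          rw [liftHom_apply, Finset.smul_sum]
          exact Finset.sum_congr rfl fun j _ => smul_comm _ _ _
      _ = ∑ j, (y j).val • (phi ⟨p^(2*m) • Pi.single j 1, smul_mem_A p m n _⟩).val := by
          exact Finset.sum_congr rfl fun j _ => by rw [hw j]
      _ = (phi ⟨p^(2*m) • y, smul_mem_A p m n y⟩).val := by
          have h5 : phi ⟨p^(2*m) • y, smul_mem_A p m n y⟩
              = ∑ j, (y j).val • phi ⟨p^(2*m) • Pi.single j 1, smul_mem_A p m n _⟩ := by
            rw [hAdec y, map_sum]
            exact Finset.sum_congr rfl fun j _ => map_nsmul phi _ _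
          rw [h5]
          simp
  have hsurjmod : ∀ y : B, ∃ x z : B, y = g0 x + p^m • z := by
    intro y
    obtain ⟨aA, haA⟩ := phi.surjective ⟨p^(2*m) • y, smul_mem_A p m n y⟩
    obtain ⟨x, hx⟩ := aA.2
    have h1 : g0 (p^(2*m) • x) = p^(2*m) • y := by
      rw [hres x]
      have h2 : (⟨p^(2*m) • x, smul_mem_A p m n x⟩ : A) = aA := Subtype.ext hx
      rw [h2, haA]
    have h2 : p^(2*m) • (g0 x - y) = 0 := by
      rw [smul_sub, ← map_nsmul, h1, sub_self]
    obtain ⟨z, hz⟩ := vdiv p m n _ h2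
    refine ⟨x, -z, ?_⟩
    rw [smul_neg, hz]
    abel
  have hsurj : Function.Surjective g0 := by
    intro y
    obtain ⟨x0, z1, h1⟩ := hsurjmod y
    obtain ⟨x1, z2, h2⟩ := hsurjmod z1
    obtain ⟨x2, z3, h3⟩ := hsurjmod z2
    refine ⟨x0 + p^m • x1 + p^(2*m) • x2, ?_⟩
    calc g0 (x0 + p^m • x1 + p^(2*m) • x2)
        = g0 x0 + p^m • g0 x1 + p^(2*m) • g0 x2 := by
          rw [map_add, map_add, map_nsmul, map_nsmul]
      _ = y := by
          rw [h1, h2, h3]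
          simp only [smul_add, smul_smul]
          rw [show p^m * p^m = p^(2*m) from by rw [← pow_add]; congr 1; omega,
            pow23 p m, smulN]
          abel
  have hinj : Function.Injective g0 := (Finite.injective_iff_surjective).mpr hsurj
  refine ⟨AddEquiv.ofBijective g0 ⟨hinj, hsurj⟩, ?_⟩
  apply DFunLike.ext
  intro x
  apply Subtype.ext
  obtain ⟨y, hy⟩ := x.2
  have h1 : ((nu p m n (AddEquiv.ofBijective g0 ⟨hinj, hsurj⟩)) x).val = g0 x.val := rfl
  rw [h1, ← hy, hres y]
  have h2 : (⟨p^(2*m) • y, smul_mem_A p m n y⟩ : A) = x := Subtype.ext hy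
  rw [h2]

lemma decomp (i j : Fin n) (hij : j ≠ i) (g : AddAut B)
    (hg : nu p m n g = nu p m n (transvec p m n i j hij)) :
    ∃ a : AddMonoid.End B, toEnd p m n g = 1 + (Ehom p m n i j + (p^m)•a) := by
  set W := transvec p m n i j hij with hW
  set k := W⁻¹ * g with hk
  have hnu1 : nu p m n k = 1 := by
    rw [hk, map_mul, map_inv, hg, inv_mul_cancel]
  have hkA : ∀ y : B, k (p^(2*m) • y) = p^(2*m) • y := by
    intro y
    have h2 := congrArg (fun e : AddAut A => (e ⟨p^(2*m)•y, smul_mem_A p m n y⟩).val) hnu1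
    exact h2
  set c : AddMonoid.End B := toEnd p m n k - 1 with hc
  have hcy : ∀ y : B, c (p^(2*m) • y) = 0 := by
    intro y
    have h1 : c (p^(2*m) • y) = k (p^(2*m)•y) - (p^(2*m)•y) := rfl
    rw [h1, hkA y, sub_self]
  have hγ : ∀ y : B, (c + Ehom p m n i j * c) (p^(2*m) • y) = 0 := by
    intro y
    have h1 : (c + Ehom p m n i j * c) (p^(2*m) • y)
        = c (p^(2*m)•y) + Ehom p m n i j (c (p^(2*m)•y)) := rfl
    rw [h1, hcy, map_zero, add_zero]
  obtain ⟨a, ha⟩ := homdiv p m n _ hγ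
  refine ⟨a, ?_⟩
  have haE : (p^m)•a = c + Ehom p m n i j * c := AddMonoidHom.ext fun x => by
    exact ha x
  have hWk : g = W * k := by rw [hk, mul_inv_cancel_left]
  have hck : toEnd p m n k = 1 + c := by rw [hc]; abel
  rw [hWk, map_mul, toEnd_transvec, haE, hck, mul_add, mul_one, add_mul, one_mul]
  abel

end Setup

end AutWS

theorem aut_restriction_not_weaklySplit
    (p m n : ℕ) (hp : p.Prime) (hodd : Odd p) (hm : 1 ≤ m) (hpm : 3 < p ^ m)
    (hn : 3 ≤ n) :
    (∀ g : AddAut (Fin n → ZMod (p ^ (3 * m))),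
      (⇑g) '' (smulSubgroup (p ^ (2 * m)) (Fin n → ZMod (p ^ (3 * m))) : Set _) =
        (smulSubgroup (p ^ (2 * m)) (Fin n → ZMod (p ^ (3 * m))) : Set _)) ∧
    ∃ ν : AddAut (Fin n → ZMod (p ^ (3 * m))) →*
        AddAut (smulSubgroup (p ^ (2 * m)) (Fin n → ZMod (p ^ (3 * m)))),
      (∀ g : AddAut (Fin n → ZMod (p ^ (3 * m))),
        ∀ x : smulSubgroup (p ^ (2 * m)) (Fin n → ZMod (p ^ (3 * m))),
          ((ν g) x : Fin n → ZMod (p ^ (3 * m))) = g (x : Fin n → ZMod (p ^ (3 * m)))) ∧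
      Function.Surjective ν ∧
      ¬ ∃ s : AddAut (smulSubgroup (p ^ (2 * m)) (Fin n → ZMod (p ^ (3 * m)))) →
          AddAut (Fin n → ZMod (p ^ (3 * m))),
        IsWeakSplitting ν s := by
  haveI : NeZero p := ⟨hp.pos.ne'⟩
  constructor
  · -- image statement
    intro g
    ext z
    constructor
    · rintro ⟨x, hx, rfl⟩
      obtain ⟨y, rfl⟩ := hx
      exact ⟨g y, (map_nsmul g _ _).symm⟩
    · rintro ⟨y, rfl⟩
      refine ⟨p^(2*m) • g.symm y, ⟨g.symm y, rfl⟩, ?_⟩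
      rw [map_nsmul, g.apply_symm_apply]
  refine ⟨AutWS.nu p m n, fun g x => rfl, AutWS.nu_surj p m n, ?_⟩
  rintro ⟨s, hsec, G₀, hG₀, hrel⟩
  -- indices
  set i0 : Fin n := ⟨0, by omega⟩ with hi0
  set i1 : Fin n := ⟨1, by omega⟩ with hi1
  set i2 : Fin n := ⟨2, by omega⟩ with hi2
  have h10 : i1 ≠ i0 := Fin.ne_of_val_ne (by simp [hi0, hi1])
  have h21 : i2 ≠ i1 := Fin.ne_of_val_ne (by simp [hi1, hi2])
  have h20 : i2 ≠ i0 := Fin.ne_of_val_ne (by simp [hi0, hi2])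
  set U := AutWS.transvec p m n i0 i1 h10 with hU
  set V := AutWS.transvec p m n i1 i2 h21 with hV
  set u := AutWS.nu p m n U with hu
  set v := AutWS.nu p m n V with hv
  have hE : (AutWS.Ehom p m n i0 i1)*(AutWS.Ehom p m n i0 i1) = 0 := AutWS.Ehom_mul_eq_zero p m n i0 i1 i0 i1 h10
  have hF : (AutWS.Ehom p m n i1 i2)*(AutWS.Ehom p m n i1 i2) = 0 := AutWS.Ehom_mul_eq_zero p m n i1 i2 i1 i2 h21
  have hFE : (AutWS.Ehom p m n i1 i2)*(AutWS.Ehom p m n i0 i1) = 0 := AutWS.Ehom_mul_eq_zero p m n i1 i2 i0 i1 h20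
  have hEF : (AutWS.Ehom p m n i0 i1)*(AutWS.Ehom p m n i1 i2) = AutWS.Ehom p m n i0 i2 := AutWS.Ehom_mul_eq p m n i0 i1 i2
  -- u^q = v^q = 1
  have hu1 : u^(p^m) = 1 := by rw [hu]; exact AutWS.nu_transvec_pow p m n i0 i1 h10
  have hv1 : v^(p^m) = 1 := by rw [hv]; exact AutWS.nu_transvec_pow p m n i1 i2 h21
  -- (s u)^q, (s v)^q ∈ G₀
  have hG₀mem : ∀ t : AddAut (smulSubgroup (p ^ (2 * m)) (Fin n → ZMod (p ^ (3 * m)))),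
      t^(p^m) = 1 → (s t)^(p^m) ∈ G₀ := by
    intro t ht
    have h := hrel (List.replicate (p^m) (t, (1:ℤ)))
      (fun pr hpr => Or.inl (by rw [List.eq_of_mem_replicate hpr]))
      (by rw [List.map_replicate, List.prod_replicate, zpow_one, ht])
    rwa [List.map_replicate, List.prod_replicate, zpow_one] at h
  have hcommAut : (s u)^(p^m) * (s v)^(p^m) = (s v)^(p^m) * (s u)^(p^m) :=
    hG₀ _ (hG₀mem u hu1) _ (hG₀mem v hv1)
  -- decompositions
  obtain ⟨a, ha⟩ := AutWS.decomp p m n i0 i1 h10 (s u) (by rw [hsec u, hu])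
  obtain ⟨b, hb⟩ := AutWS.decomp p m n i1 i2 h21 (s v) (by rw [hsec v, hv])
  have hcomΛ : (1+((AutWS.Ehom p m n i0 i1)+(p^m)•a))^(p^m) * (1+((AutWS.Ehom p m n i1 i2)+(p^m)•b))^(p^m)
      = (1+((AutWS.Ehom p m n i1 i2)+(p^m)•b))^(p^m) * (1+((AutWS.Ehom p m n i0 i1)+(p^m)•a))^(p^m) := by
    rw [← ha, ← hb, ← map_pow, ← map_pow, ← map_mul, ← map_mul, hcommAut]
  -- numerical facts
  obtain ⟨c2, hc2'⟩ := (hodd.pow : Odd (p^m))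
  have hc2 : (p^m).choose 2 = (p^m)*c2 := by
    rw [Nat.choose_two_right, hc2']
    rw [show 2*c2+1-1 = 2*c2 from by omega,
      Nat.mul_div_assoc _ (dvd_mul_right 2 c2), Nat.mul_div_cancel_left c2 (by norm_num)]
  have hqd : p^m = p * p^(m-1) := by
    conv_lhs => rw [show m = (m-1)+1 from by omega]
    rw [pow_succ']
  obtain ⟨β, hβ⟩ := hp.dvd_choose_pow (by norm_num : (3:ℕ) ≠ 0) (by omega : (3:ℕ) ≠ p^m)
  obtain ⟨z, hz⟩ := AutWS.key (p^m) p c2 (p^(m-1)) β hc2 hqd hβ _ _ a b hE hF hFE hcomΛ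
  -- evaluate at `single i2 1`, coordinate `i0`
  rw [hEF] at hz
  have heval := congrFun (DFunLike.congr_fun hz (Pi.single i2 1)) i0
  have hL : (((p^m*p^m) • AutWS.Ehom p m n i0 i2) (Pi.single i2 1)) i0
      = ((p^m*p^m : ℕ) : ZMod (p^(3*m))) := by
    change ((p^m*p^m) • (AutWS.Ehom p m n i0 i2 (Pi.single i2 1))) i0 = _
    rw [AutWS.Ehom_apply, Pi.single_eq_same, Pi.smul_apply,
      Pi.single_eq_same, nsmul_eq_mul, mul_one]
  set wv : ZMod (p^(3*m)) := z (Pi.single i2 1) i0 with hwv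
  have hR : (((p^m*p^m*p) • z) (Pi.single i2 1)) i0
      = ((p^m*p^m*p : ℕ) : ZMod (p^(3*m))) * wv := by
    change ((p^m*p^m*p) • (z (Pi.single i2 1))) i0 = _
    rw [Pi.smul_apply, nsmul_eq_mul, hwv]
  rw [hL, hR] at heval
  -- contradiction in ZMod
  have hnil : IsNilpotent ((p : ZMod (p^(3*m))) * wv) := by
    refine ⟨3*m, ?_⟩
    rw [mul_pow, show ((p : ZMod (p^(3*m))))^(3*m) = ((p^(3*m) : ℕ) : ZMod (p^(3*m))) from
      by push_cast; rfl, ZMod.natCast_self, zero_mul]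
  have hunit : IsUnit (1 - (p : ZMod (p^(3*m))) * wv) := IsNilpotent.isUnit_one_sub hnil
  have hzero : ((p^m*p^m : ℕ) : ZMod (p^(3*m))) * (1 - (p : ZMod (p^(3*m))) * wv) = 0 := by
    rw [mul_sub, mul_one]
    rw [show ((p^m*p^m : ℕ) : ZMod (p^(3*m))) * ((p : ZMod (p^(3*m))) * wv)
      = ((p^m*p^m*p : ℕ) : ZMod (p^(3*m))) * wv from by push_cast; ring]
    rw [← heval, sub_self]
  have h2z : ((p^m*p^m : ℕ) : ZMod (p^(3*m))) = 0 :=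
    (hunit.mul_left_eq_zero).mp hzero
  rw [ZMod.natCast_eq_zero_iff, ← pow_add] at h2z
  have := (Nat.pow_dvd_pow_iff_le_right hp.one_lt).mp h2z
  omega
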